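/- Let (X_t)_{t≥1} be a sequence of vectors in ℝ^d with ‖X_t‖₂ ≤ 1 for all t, let λ > 0, and define G_t = λ·I_d + Σ_{i=1}^t X_i X_iᵀ. Suppose there is an integer n ≥ 0 such that the minimum eigenvalue of G_n satisfies λ_min(G_n) ≥ 1. Then for all T > n, Σ_{t=n+1}^T ‖X_t‖_{G_{t−1}⁻¹} ≤ √(2·(T − n)·d·log(1 + T/(d·λ))). -/

import Mathlib

open Matrix

section EPAux
variable {d : ℕ}

lemma sum_mulVec' {ι : Type*} (s : Finset ι) (A : ι → Matrix (Fin d) (Fin d) ℝ) (x : Fin d → ℝ) :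
    (∑ i ∈ s, A i) *ᵥ x = ∑ i ∈ s, (A i) *ᵥ x := by
  ext j
  simp only [mulVec, dotProduct, Finset.sum_apply, Finset.sum_mul, Matrix.sum_apply]
  rw [Finset.sum_comm]

lemma dotProduct_sum' {ι : Type*} (s : Finset ι) (x : Fin d → ℝ) (y : ι → Fin d → ℝ) :
    x ⬝ᵥ (∑ i ∈ s, y i) = ∑ i ∈ s, x ⬝ᵥ y i := by
  simp only [dotProduct, Finset.sum_apply, Finset.mul_sum]
  rw [Finset.sum_comm]

lemma dot_vecMulVec (u x : Fin d → ℝ) :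
    x ⬝ᵥ (vecMulVec u u) *ᵥ x = (u ⬝ᵥ x) ^ 2 := by
  calc x ⬝ᵥ (vecMulVec u u) *ᵥ x = ∑ j, ∑ k, x j * (u j * u k * x k) := by
        simp [dotProduct, mulVec, vecMulVec_apply, Finset.mul_sum]
    _ = ∑ j, ∑ k, (u j * x j) * (u k * x k) :=
        Finset.sum_congr rfl fun j _ => Finset.sum_congr rfl fun k _ => by ring
    _ = (∑ j, u j * x j) * (∑ k, u k * x k) := (Finset.sum_mul_sum _ _ _ _).symm
    _ = (u ⬝ᵥ x) ^ 2 := by rw [sq]; rfl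

lemma quad_formula (X : ℕ → Fin d → ℝ) (lam : ℝ) (G : ℕ → Matrix (Fin d) (Fin d) ℝ)
    (hG : ∀ t, G t = lam • (1 : Matrix (Fin d) (Fin d) ℝ)
        + ∑ i ∈ Finset.Icc 1 t, vecMulVec (X i) (X i)) (t : ℕ) (x : Fin d → ℝ) :
    x ⬝ᵥ (G t) *ᵥ x = lam * (∑ i, x i ^ 2) + ∑ i ∈ Finset.Icc 1 t, (X i ⬝ᵥ x) ^ 2 := by
  rw [hG t, add_mulVec, dotProduct_add, smul_mulVec, one_mulVec, dotProduct_smul,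
    sum_mulVec', dotProduct_sum']
  congr 1
  · simp [dotProduct, sq, smul_eq_mul]
  · exact Finset.sum_congr rfl fun i _ => dot_vecMulVec _ _

lemma G_hermitian (X : ℕ → Fin d → ℝ) (lam : ℝ) (G : ℕ → Matrix (Fin d) (Fin d) ℝ)
    (hG : ∀ t, G t = lam • (1 : Matrix (Fin d) (Fin d) ℝ)
        + ∑ i ∈ Finset.Icc 1 t, vecMulVec (X i) (X i)) (t : ℕ) :
    (G t).IsHermitian := by
  rw [hG t]
  refine Matrix.IsHermitian.add ?_ ?_
  · unfold Matrix.IsHermitian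
    simp
  · unfold Matrix.IsHermitian
    rw [conjTranspose_sum]
    refine Finset.sum_congr rfl fun i _ => ?_
    ext a b
    simp [conjTranspose_apply, vecMulVec_apply, mul_comm]

lemma G_posdef (X : ℕ → Fin d → ℝ) (lam : ℝ) (hlam : 0 < lam)
    (G : ℕ → Matrix (Fin d) (Fin d) ℝ)
    (hG : ∀ t, G t = lam • (1 : Matrix (Fin d) (Fin d) ℝ)
        + ∑ i ∈ Finset.Icc 1 t, vecMulVec (X i) (X i)) (t : ℕ) :
    (G t).PosDef := by
  refine Matrix.PosDef.of_dotProduct_mulVec_pos (G_hermitian X lam G hG t) (fun x hx => ?_)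
  have hstar : star x = x := star_trivial x
  rw [hstar, quad_formula X lam G hG t x]
  have h1 : 0 < lam * ∑ i, x i ^ 2 := by
    apply mul_pos hlam
    have : ∃ i, x i ≠ 0 := by
      by_contra h
      push_neg at h
      exact hx (funext h)
    obtain ⟨i, hi⟩ := this
    apply Finset.sum_pos' (fun j _ => sq_nonneg _) ⟨i, Finset.mem_univ i, by positivity⟩
  have h2 : 0 ≤ ∑ i ∈ Finset.Icc 1 t, (X i ⬝ᵥ x) ^ 2 :=
    Finset.sum_nonneg fun i _ => sq_nonneg _
  linarith

lemma det_add_outer (A : Matrix (Fin d) (Fin d) ℝ) (hA : A.PosDef) (u : Fin d → ℝ) :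
    (A + vecMulVec u u).det = A.det * (1 + u ⬝ᵥ A⁻¹ *ᵥ u) := by
  rw [show vecMulVec u u = replicateCol (Fin 1) u * replicateRow (Fin 1) u from by
      convert vecMulVec_eq (Fin 1) u u,
    Matrix.det_add_mul (replicateCol (Fin 1) u) (replicateRow (Fin 1) u) hA.det_pos.ne'.isUnit]
  congr 1
  rw [Matrix.det_fin_one]
  simp only [Matrix.add_apply, Matrix.mul_apply, Matrix.one_apply, Matrix.replicateRow_apply,
    Matrix.replicateCol_apply, mulVec, dotProduct, Finset.mul_sum, Finset.sum_mul, if_pos rfl]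
  congr 1
  rw [Finset.sum_comm]
  exact Finset.sum_congr rfl fun j _ => Finset.sum_congr rfl fun k _ => by ring

lemma inv_quad_le (A : Matrix (Fin d) (Fin d) ℝ) (hA : A.PosDef)
    (hge : ∀ x : Fin d → ℝ, ∑ i, x i ^ 2 ≤ x ⬝ᵥ A *ᵥ x) (u : Fin d → ℝ) :
    u ⬝ᵥ A⁻¹ *ᵥ u ≤ ∑ i, u i ^ 2 := by
  set y : Fin d → ℝ := A⁻¹ *ᵥ u with hy
  have hAy : A *ᵥ y = u := by
    rw [hy, mulVec_mulVec, Matrix.mul_nonsing_inv _ hA.det_pos.ne'.isUnit, one_mulVec]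
  have hq0 : 0 ≤ u ⬝ᵥ y := by
    have := hA.inv.posSemidef.dotProduct_mulVec_nonneg u
    rwa [star_trivial] at this
  have hyAy : y ⬝ᵥ A *ᵥ y = u ⬝ᵥ y := by rw [hAy, dotProduct_comm]
  have hcs : (u ⬝ᵥ y) ^ 2 ≤ (∑ i, u i ^ 2) * (u ⬝ᵥ y) := by
    calc (u ⬝ᵥ y) ^ 2 ≤ (∑ i, u i ^ 2) * (∑ i, y i ^ 2) := by
          simpa [dotProduct] using Finset.sum_mul_sq_le_sq_mul_sq Finset.univ u y
      _ ≤ (∑ i, u i ^ 2) * (u ⬝ᵥ y) := by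
          apply mul_le_mul_of_nonneg_left _ (Finset.sum_nonneg fun i _ => sq_nonneg _)
          rw [← hyAy]; exact hge y
  rcases eq_or_lt_of_le hq0 with h | h
  · rw [← h]; exact Finset.sum_nonneg fun i _ => sq_nonneg _
  · nlinarith [hcs, h]

lemma trace_eq_sum_eigs (A : Matrix (Fin d) (Fin d) ℝ) (hH : A.IsHermitian) :
    A.trace = ∑ i, hH.eigenvalues i := by
  simpa using hH.trace_eq_sum_eigenvalues

lemma det_le_pow_of_trace_le (hd : 0 < d) (A : Matrix (Fin d) (Fin d) ℝ)
    (hA : A.PosDef) (c : ℝ) (htr : A.trace ≤ c) :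
    A.det ≤ (c / d) ^ d := by
  have hH := hA.isHermitian
  have hnn : ∀ i, 0 ≤ hH.eigenvalues i := fun i => hA.posSemidef.eigenvalues_nonneg i
  have hdet : A.det = ∏ i, hH.eigenvalues i := by
    simpa using hH.det_eq_prod_eigenvalues
  have hdne : (d : ℝ) ≠ 0 := Nat.cast_ne_zero.mpr hd.ne'
  have amgm : ∏ i, hH.eigenvalues i ^ ((d : ℝ)⁻¹) ≤ ∑ i, (d : ℝ)⁻¹ * hH.eigenvalues i := by
    refine Real.geom_mean_le_arith_mean_weighted Finset.univ _ _ (fun i _ => by positivity) ?_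
      (fun i _ => hnn i)
    simp [Finset.card_univ, hdne]
  have hsum : ∑ i, (d : ℝ)⁻¹ * hH.eigenvalues i ≤ c / d := by
    rw [← Finset.mul_sum, ← trace_eq_sum_eigs A hH, div_eq_inv_mul]
    exact mul_le_mul_of_nonneg_left htr (by positivity)
  have hprod : (∏ i, hH.eigenvalues i ^ ((d : ℝ)⁻¹)) ^ d = ∏ i, hH.eigenvalues i := by
    rw [← Finset.prod_pow]
    refine Finset.prod_congr rfl fun i _ => ?_
    rw [← Real.rpow_natCast (hH.eigenvalues i ^ ((d : ℝ)⁻¹)) d, ← Real.rpow_mul (hnn i),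
      inv_mul_cancel₀ hdne, Real.rpow_one]
  calc A.det = (∏ i, hH.eigenvalues i ^ ((d : ℝ)⁻¹)) ^ d := by rw [hprod, hdet]
    _ ≤ (c / d) ^ d := by
        apply pow_le_pow_left₀ (Finset.prod_nonneg fun i _ => Real.rpow_nonneg (hnn i) _)
        exact le_trans amgm hsum

lemma half_le_log_one_add {u : ℝ} (hu0 : 0 ≤ u) (hu1 : u ≤ 1) :
    u ≤ 2 * Real.log (1 + u) := by
  have hpos : (0:ℝ) < 1 + u := by linarith
  have h1 : 1 - (1 + u)⁻¹ ≤ Real.log (1 + u) := Real.one_sub_inv_le_log_of_pos hpos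
  have h2 : (1 + u) * (1 + u)⁻¹ = 1 := mul_inv_cancel₀ hpos.ne'
  nlinarith [h1, h2, hpos]

end EPAux

/-- Elliptical potential summation bound: if `λ_min(G_n) ≥ 1` (i.e. `G_n ⪰ I`), then
`Σ_{t=n+1}^T ‖X_t‖_{G_{t−1}⁻¹} ≤ √(2·(T − n)·d·log(1 + T/(d·λ)))`. -/
theorem sum_norms_inv_design_le
    {d : ℕ} (X : ℕ → (Fin d → ℝ))
    (hX : ∀ t, 1 ≤ t → Real.sqrt (∑ i, X t i ^ 2) ≤ 1)
    (lam : ℝ) (hlam : 0 < lam)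
    (G : ℕ → Matrix (Fin d) (Fin d) ℝ)
    (hG : ∀ t, G t = lam • (1 : Matrix (Fin d) (Fin d) ℝ)
        + ∑ i ∈ Finset.Icc 1 t, vecMulVec (X i) (X i))
    (n : ℕ)
    (hmin : ∀ x : Fin d → ℝ, ∑ i, x i ^ 2 ≤ x ⬝ᵥ (G n).mulVec x) :
    ∀ T : ℕ, n < T →
      ∑ t ∈ Finset.Icc (n + 1) T, Real.sqrt (X t ⬝ᵥ ((G (t - 1))⁻¹).mulVec (X t))
        ≤ Real.sqrt (2 * (T - n : ℝ) * d * Real.log (1 + T / (d * lam))) := by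
  intro T hnT
  rcases Nat.eq_zero_or_pos d with hd0 | hd
  · subst hd0
    have hz : ∀ t, X t ⬝ᵥ ((G (t - 1))⁻¹).mulVec (X t) = 0 := by
      intro t; simp [dotProduct]
    calc ∑ t ∈ Finset.Icc (n + 1) T, Real.sqrt (X t ⬝ᵥ ((G (t - 1))⁻¹).mulVec (X t))
        = 0 := by simp [hz]
      _ ≤ _ := Real.sqrt_nonneg _
  -- main case
  have hpd : ∀ t, (G t).PosDef := G_posdef X lam hlam G hG
  set xs : ℕ → ℝ := fun t => X t ⬝ᵥ ((G (t - 1))⁻¹).mulVec (X t) with hxs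
  -- decomposition of G (t+1)
  have hsplit : ∀ t : ℕ, G (t + 1) = G t + vecMulVec (X (t + 1)) (X (t + 1)) := by
    intro t
    rw [hG (t + 1), hG t, Finset.sum_Icc_succ_top (Nat.le_add_left 1 t), ← add_assoc]
  have hrec : ∀ t : ℕ, (G (t + 1)).det = (G t).det * (1 + xs (t + 1)) := by
    intro t
    rw [hsplit t, det_add_outer _ (hpd t) _]
    simp [hxs]
  have hx_nonneg : ∀ t : ℕ, 0 ≤ xs t := by
    intro t
    have := (hpd (t - 1)).inv.posSemidef.dotProduct_mulVec_nonneg (X t)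
    rwa [star_trivial] at this
  -- quadratic form monotonicity and per-term upper bound
  have hX2 : ∀ t, 1 ≤ t → ∑ i, X t i ^ 2 ≤ 1 := by
    intro t ht
    have h0 : 0 ≤ ∑ i, X t i ^ 2 := Finset.sum_nonneg fun i _ => sq_nonneg _
    nlinarith [hX t ht, Real.sq_sqrt h0, Real.sqrt_nonneg (∑ i, X t i ^ 2)]
  have hmono : ∀ t, n ≤ t → ∀ x : Fin d → ℝ, ∑ i, x i ^ 2 ≤ x ⬝ᵥ (G t) *ᵥ x := by
    intro t ht x
    refine le_trans (hmin x) ?_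
    rw [quad_formula X lam G hG n x, quad_formula X lam G hG t x]
    exact add_le_add_right (Finset.sum_le_sum_of_subset_of_nonneg
      (Finset.Icc_subset_Icc_right ht) (fun i _ _ => sq_nonneg _)) _
  have hx_le_one : ∀ t, n + 1 ≤ t → xs t ≤ 1 := by
    intro t ht
    have h1 : 1 ≤ t := le_trans (Nat.le_add_left 1 n) ht
    have hnt : n ≤ t - 1 := by omega
    refine le_trans (inv_quad_le (G (t - 1)) (hpd _) (hmono (t - 1) hnt) (X t)) (hX2 t h1)
  -- telescoping
  have htel : ∀ M, n ≤ M → Real.log (G M).det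
      = Real.log (G n).det + ∑ t ∈ Finset.Icc (n + 1) M, Real.log (1 + xs t) := by
    intro M hM
    induction M, hM using Nat.le_induction with
    | base => rw [Finset.Icc_eq_empty (by omega), Finset.sum_empty, add_zero]
    | succ M hM ih =>
        rw [Finset.sum_Icc_succ_top (by omega), hrec M,
          Real.log_mul (hpd M).det_pos.ne' (by nlinarith [hx_nonneg (M + 1)]), ih, add_assoc]
  -- determinant lower bound
  have hlow : ∀ t, lam ^ d ≤ (G t).det := by
    intro t
    induction t with
    | zero =>
        rw [hG 0]
        rw [show Finset.Icc 1 0 = (∅ : Finset ℕ) from Finset.Icc_eq_empty (by omega)]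
        rw [Finset.sum_empty, add_zero, Matrix.det_smul, Matrix.det_one]
        simp
    | succ t ih =>
        rw [hrec t]
        nlinarith [(hpd t).det_pos, hx_nonneg (t + 1)]
  -- trace bound
  have htrace : (G T).trace ≤ lam * d + T := by
    rw [hG T, Matrix.trace_add, Matrix.trace_smul, Matrix.trace_one, Matrix.trace_sum]
    have h1 : ∀ i ∈ Finset.Icc 1 T, (vecMulVec (X i) (X i)).trace ≤ 1 := by
      intro i hi
      have : (vecMulVec (X i) (X i)).trace = ∑ j, X i j ^ 2 := by
        simp [Matrix.trace, Matrix.diag, vecMulVec_apply, sq]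
      rw [this]
      exact hX2 i (Finset.mem_Icc.mp hi).1
    have h2 : ∑ i ∈ Finset.Icc 1 T, (vecMulVec (X i) (X i)).trace ≤ (T : ℝ) := by
      calc ∑ i ∈ Finset.Icc 1 T, (vecMulVec (X i) (X i)).trace
          ≤ ∑ i ∈ Finset.Icc 1 T, (1 : ℝ) := Finset.sum_le_sum h1
        _ = T := by simp [Nat.card_Icc]
    simp only [Fintype.card_fin, smul_eq_mul]
    linarith
  -- log det bounds
  have hdpos : (0:ℝ) < d := Nat.cast_pos.mpr hd
  have hlogsum : ∑ t ∈ Finset.Icc (n + 1) T, Real.log (1 + xs t)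
      ≤ d * Real.log (1 + T / (d * lam)) := by
    have h1 : Real.log (G T).det ≤ d * Real.log ((lam * d + T) / d) := by
      have hle := det_le_pow_of_trace_le hd (G T) (hpd T) (lam * d + T) htrace
      calc Real.log (G T).det ≤ Real.log (((lam * d + T) / d) ^ d) :=
            Real.log_le_log (hpd T).det_pos hle
        _ = d * Real.log ((lam * d + T) / d) := Real.log_pow _ d
    have h2 : (d : ℝ) * Real.log lam ≤ Real.log (G n).det := by
      calc (d : ℝ) * Real.log lam = Real.log (lam ^ d) := (Real.log_pow lam d).symm
        _ ≤ Real.log (G n).det := Real.log_le_log (by positivity) (hlow n)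
    have h3 : ∑ t ∈ Finset.Icc (n + 1) T, Real.log (1 + xs t)
        = Real.log (G T).det - Real.log (G n).det := by
      rw [htel T hnT.le]; ring
    have h4 : Real.log ((lam * d + T) / d) - Real.log lam = Real.log (1 + T / (d * lam)) := by
      rw [← Real.log_div (by positivity) hlam.ne']
      congr 1
      field_simp
    rw [h3]
    calc Real.log (G T).det - Real.log (G n).det
        ≤ d * Real.log ((lam * d + T) / d) - d * Real.log lam := by linarith
      _ = d * (Real.log ((lam * d + T) / d) - Real.log lam) := by ring
      _ = d * Real.log (1 + T / (d * lam)) := by rw [h4]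
  -- Cauchy–Schwarz on the sum
  set s : Finset ℕ := Finset.Icc (n + 1) T with hs
  have hcard : (s.card : ℝ) = (T : ℝ) - n := by
    rw [hs, Nat.card_Icc]
    have : T + 1 - (n + 1) = T - n := by omega
    rw [this, Nat.cast_sub hnT.le]
  have hS_nonneg : 0 ≤ ∑ t ∈ s, xs t := Finset.sum_nonneg fun t _ => hx_nonneg t
  have hcs : (∑ t ∈ s, Real.sqrt (xs t)) ^ 2 ≤ (∑ t ∈ s, xs t) * s.card := by
    have := Finset.sum_mul_sq_le_sq_mul_sq s (fun t => Real.sqrt (xs t)) (fun _ => (1:ℝ))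
    simpa [Real.sq_sqrt (hx_nonneg _), Finset.sum_const, mul_comm] using this
  have hSle : ∑ t ∈ s, xs t ≤ 2 * (d * Real.log (1 + T / (d * lam))) := by
    calc ∑ t ∈ s, xs t ≤ ∑ t ∈ s, 2 * Real.log (1 + xs t) := by
          refine Finset.sum_le_sum fun t ht => ?_
          exact half_le_log_one_add (hx_nonneg t) (hx_le_one t (Finset.mem_Icc.mp ht).1)
      _ = 2 * ∑ t ∈ s, Real.log (1 + xs t) := by rw [Finset.mul_sum]
      _ ≤ 2 * (d * Real.log (1 + T / (d * lam))) := by linarith [hlogsum]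
  have hsqrt_nonneg : 0 ≤ ∑ t ∈ s, Real.sqrt (xs t) :=
    Finset.sum_nonneg fun t _ => Real.sqrt_nonneg _
  have hTn : (0:ℝ) ≤ (T:ℝ) - n := by
    have := hnT.le
    have : (n:ℝ) ≤ T := Nat.cast_le.mpr this
    linarith
  have hfin : (∑ t ∈ s, Real.sqrt (xs t)) ^ 2
      ≤ 2 * ((T:ℝ) - n) * d * Real.log (1 + T / (d * lam)) := by
    calc (∑ t ∈ s, Real.sqrt (xs t)) ^ 2 ≤ (∑ t ∈ s, xs t) * s.card := hcs
      _ ≤ (2 * (d * Real.log (1 + T / (d * lam)))) * s.card := by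
          apply mul_le_mul_of_nonneg_right hSle (Nat.cast_nonneg _)
      _ = 2 * ((T:ℝ) - n) * d * Real.log (1 + T / (d * lam)) := by
          rw [hcard]; ring
  rw [show (∑ t ∈ Finset.Icc (n + 1) T, Real.sqrt (X t ⬝ᵥ ((G (t - 1))⁻¹).mulVec (X t)))
      = ∑ t ∈ s, Real.sqrt (xs t) from rfl]
  exact (Real.le_sqrt hsqrt_nonneg (le_trans (sq_nonneg _) hfin)).mpr hfin
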